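/- The 12×12 integer matrix M (the action of t_{α_0}* on Pic for n=4, m=11, given explicitly in the paper with first row (28,9,9,1,1,1,4,4,4,4,4,4) etc.) satisfies (M - I)³ = 0 and (M - I)² ≠ 0; consequently the entries of M^l grow at most quadratically in l. -/

import Mathlib

/-- The action of t_{α₀}* on Pic for n = 4, m = 11 (the explicit 12×12 matrix). -/
def M : Matrix (Fin 12) (Fin 12) ℤ :=
  !![28, 9, 9, 1, 1, 1, 4, 4, 4, 4, 4, 4;
     -27, -8, -9, -1, -1, -1, -4, -4, -4, -4, -4, -4;
     -27, -9, -8, -1, -1, -1, -4, -4, -4, -4, -4, -4;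
     -15, -5, -5, 0, -1, -1, -2, -2, -2, -2, -2, -2;
     -15, -5, -5, -1, 0, -1, -2, -2, -2, -2, -2, -2;
     -15, -5, -5, -1, -1, 0, -2, -2, -2, -2, -2, -2;
     -6, -2, -2, 0, 0, 0, 0, -1, -1, -1, -1, -1;
     -6, -2, -2, 0, 0, 0, -1, 0, -1, -1, -1, -1;
     -6, -2, -2, 0, 0, 0, -1, -1, 0, -1, -1, -1;
     -6, -2, -2, 0, 0, 0, -1, -1, -1, 0, -1, -1;
     -6, -2, -2, 0, 0, 0, -1, -1, -1, -1, 0, -1;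
     -6, -2, -2, 0, 0, 0, -1, -1, -1, -1, -1, 0]

lemma hN3 : (M - 1) ^ 3 = 0 := by decide

lemma formula (l : ℕ) :
    M ^ l = 1 + (l : ℤ) • (M - 1) + (l.choose 2 : ℤ) • (M - 1) ^ 2 := by
  induction l with
  | zero => simp
  | succ l ih =>
    have hM : M = 1 + (M - 1) := by rw [add_sub_cancel]
    rw [pow_succ, ih]
    nth_rewrite 3 [hM]
    have h3 : (M - 1) ^ 3 = 0 := hN3
    push_cast [Nat.choose_succ_succ, Nat.choose_one_right]
    set N := M - 1 with hN
    have e : (1 + (l : ℤ) • N + (l.choose 2 : ℤ) • N ^ 2) * (1 + N)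
        = 1 + ((l : ℤ) + 1) • N + ((l : ℤ) + (l.choose 2 : ℤ)) • N ^ 2
          + (l.choose 2 : ℤ) • N ^ 3 := by
      simp only [mul_add, add_mul, one_mul, mul_one, smul_mul_assoc, add_smul, one_smul,
        ← pow_succ, ← pow_two]
      abel
    rw [e, h3, smul_zero, add_zero]

lemma hA : ∀ i j : Fin 12, |(M - 1) i j| ≤ (27 : ℤ) := by decide

lemma hB : ∀ i j : Fin 12, |(((M - 1) ^ 2 : Matrix (Fin 12) (Fin 12) ℤ)) i j| ≤ (54 : ℤ) := by decide

lemma hNE : (((M - 1) ^ 2 : Matrix (Fin 12) (Fin 12) ℤ)) (0 : Fin 12) (0 : Fin 12) = (54 : ℤ) := by decide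

lemma choose2_le (l : ℕ) : (l.choose 2 : ℤ) ≤ (l : ℤ) ^ 2 := by
  have : l.choose 2 ≤ l ^ 2 := by
    induction l with
    | zero => simp
    | succ l ih =>
      rw [Nat.choose_succ_succ, Nat.choose_one_right]
      nlinarith
  exact_mod_cast this

/-- M is unipotent with (M - I)³ = 0 and (M - I)² ≠ 0; consequently the entries of
M^l grow at most quadratically in l. -/
theorem stmt12 :
    (M - 1) ^ 3 = 0 ∧ (M - 1) ^ 2 ≠ 0 ∧
    ∃ C : ℤ, ∀ (l : ℕ) (i j : Fin 12), |(M ^ l) i j| ≤ C * ((l : ℤ) ^ 2 + 1) := by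
  refine ⟨hN3, ?_, 82, ?_⟩
  · intro h
    have h0 : (((M - 1) ^ 2 : Matrix (Fin 12) (Fin 12) ℤ)) (0 : Fin 12) (0 : Fin 12) = 0 := by rw [h]; rfl
    rw [hNE] at h0
    exact absurd h0 (by norm_num)
  · intro l i j
    have ha := hA i j
    have hb := hB i j
    have hc := choose2_le l
    have hc0 : (0 : ℤ) ≤ (l.choose 2 : ℤ) := by positivity
    have hl0 : (0 : ℤ) ≤ (l : ℤ) := by positivity
    have h1 : |(1 : Matrix (Fin 12) (Fin 12) ℤ) i j| ≤ 1 := by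
      simp only [Matrix.one_apply]; split <;> simp
    rw [formula l]
    simp only [Matrix.add_apply, Matrix.smul_apply, smul_eq_mul]
    have habs : |(1 : Matrix (Fin 12) (Fin 12) ℤ) i j + (l : ℤ) * (M - 1) i j
            + (l.choose 2 : ℤ) * (((M - 1) ^ 2 : Matrix (Fin 12) (Fin 12) ℤ)) i j|
        ≤ |(1 : Matrix (Fin 12) (Fin 12) ℤ) i j| + |(l : ℤ) * (M - 1) i j|
            + |(l.choose 2 : ℤ) * (((M - 1) ^ 2 : Matrix (Fin 12) (Fin 12) ℤ)) i j| :=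
      (abs_add_le _ _).trans (add_le_add_left (abs_add_le _ _) _)
    refine habs.trans ?_
    rw [abs_mul, abs_mul]
    rw [abs_of_nonneg hl0, abs_of_nonneg hc0]
    have hane : (0:ℤ) ≤ |(M - 1) i j| := abs_nonneg _
    have hbne : (0:ℤ) ≤ |(((M - 1) ^ 2 : Matrix (Fin 12) (Fin 12) ℤ)) i j| := abs_nonneg _
    nlinarith [sq_nonneg ((l:ℤ) - 1)]
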